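/- Let e₁, …, eₙ be an orthonormal basis of V and let 𝔽 = Σᵢ γ(aᵢ)∘γ(bᵢ)∘Kᵢ be a finite sum where aᵢ, bᵢ ∈ V satisfy g(aᵢ, bᵢ) = 0 and each Kᵢ is a γ-invariant endomorphism of E. Then (ε/4) Σₖ₌₁ⁿ ηₖ tr({γ(eₖ), 𝔽}∘{γ(eₖ), 𝔽}) = (n − 2) tr(𝔽∘𝔽), where {·,·} denotes the anticommutator. (This is the Clifford trace identity (ε/4) g(eᵢ,eⱼ) tr({γ(eⁱ), /F}{γ(eʲ), /F}) = ((2−n)/2) tr_g(F²) for the quantized twisting curvature /F, used to produce the Yang–Mills Lagrangian with its dimension-dependent coefficient n − 3 in the Dirac action.) -/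

import Mathlib

/-- Clifford trace identity for a quantized two-form
`𝔽 = Σᵢ γ(aᵢ)∘γ(bᵢ)∘Kᵢ` with `g(aᵢ,bᵢ) = 0` and γ-invariant `Kᵢ`:
`(ε/4) Σₖ ηₖ tr({γ(eₖ), 𝔽}∘{γ(eₖ), 𝔽}) = (n − 2) tr(𝔽∘𝔽)`. -/
theorem stmt_16 (V : Type*) [AddCommGroup V] [Module ℝ V]
    (E : Type*) [AddCommGroup E] [Module ℂ E] [FiniteDimensional ℂ E]
    (g : V → V → ℝ) (hg : ∀ v w : V, g v w = g w v)
    (hgadd : ∀ u v w : V, g (u + v) w = g u w + g v w)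
    (hgsmul : ∀ (c : ℝ) (v w : V), g (c • v) w = c * g v w)
    (ε : ℝ) (hε : ε = 1 ∨ ε = -1)
    (γ : V → Module.End ℂ E)
    (hγadd : ∀ v w : V, γ (v + w) = γ v + γ w)
    (hγsmul : ∀ (c : ℝ) (v : V), γ (c • v) = (c : ℂ) • γ v)
    (hcl : ∀ v w : V, γ v * γ w + γ w * γ v = ((2 * ε * g v w : ℝ) : ℂ) • 1)
    (n : ℕ) (e : Module.Basis (Fin n) ℝ V)
    (η : Fin n → ℝ) (hη : ∀ k, η k = 1 ∨ η k = -1)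
    (horth : ∀ i j : Fin n, i ≠ j → g (e i) (e j) = 0)
    (hdiag : ∀ i : Fin n, g (e i) (e i) = η i)
    (m : ℕ) (a b : Fin m → V) (K : Fin m → Module.End ℂ E)
    (hab : ∀ i : Fin m, g (a i) (b i) = 0)
    (hK : ∀ (i : Fin m) (v : V), K i * γ v = γ v * K i)
    (𝔽 : Module.End ℂ E)
    (h𝔽 : 𝔽 = ∑ i : Fin m, γ (a i) * γ (b i) * K i) :
    ((ε : ℂ) / 4) * ∑ k : Fin n, ((η k : ℝ) : ℂ) *
        LinearMap.trace ℂ E ((γ (e k) * 𝔽 + 𝔽 * γ (e k)) * (γ (e k) * 𝔽 + 𝔽 * γ (e k)))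
      = ((n : ℂ) - 2) * LinearMap.trace ℂ E (𝔽 * 𝔽) := by
  have hη2 : ∀ k, η k * η k = 1 := fun k => by rcases hη k with h | h <;> rw [h] <;> norm_num
  have hε2 : ε * ε = 1 := by rcases hε with h | h <;> rw [h] <;> norm_num
  have hγ0 : γ 0 = 0 := by
    have := hγsmul 0 0
    simpa using this
  have hg0 : ∀ w : V, g 0 w = 0 := fun w => by
    have := hgsmul 0 0 w
    simpa using this
  -- squares of basis gammas
  have hsq : ∀ k, γ (e k) * γ (e k) = ((ε * η k : ℝ) : ℂ) • 1 := by
    intro k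
    have h := hcl (e k) (e k)
    rw [hdiag k] at h
    have h2 : (2 : ℂ) • (γ (e k) * γ (e k)) = (2 : ℂ) • (((ε * η k : ℝ) : ℂ) • 1) := by
      rw [two_smul, h, smul_smul]
      congr 1
      push_cast
      ring
    exact smul_right_injective _ (by norm_num : (2 : ℂ) ≠ 0) h2
  -- anticommutation in rewriting form
  have hac : ∀ v w : V, γ v * γ w = ((2 * ε * g v w : ℝ) : ℂ) • 1 - γ w * γ v :=
    fun v w => eq_sub_of_add_eq (hcl v w)
  -- γ of sums
  have hγsum : ∀ (s : Finset (Fin n)) (c : Fin n → ℝ),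
      γ (∑ k ∈ s, c k • e k) = ∑ k ∈ s, ((c k : ℝ) : ℂ) • γ (e k) := by
    intro s c
    induction s using Finset.induction_on with
    | empty => simpa using hγ0
    | @insert _ _ hnot ih =>
        rw [Finset.sum_insert hnot, hγadd, hγsmul, ih, Finset.sum_insert hnot]
  -- g of sums in first slot
  have hgsum : ∀ (s : Finset (Fin n)) (c : Fin n → ℝ) (w : V),
      g (∑ k ∈ s, c k • e k) w = ∑ k ∈ s, c k * g (e k) w := by
    intro s c w
    induction s using Finset.induction_on with
    | empty => simpa using hg0 w
    | @insert _ _ hnot ih =>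
        rw [Finset.sum_insert hnot, hgadd, hgsmul, ih, Finset.sum_insert hnot]
  -- coefficients
  have hcoef : ∀ (v : V) (k : Fin n), g (e k) v = e.repr v k * η k := by
    intro v k
    rw [hg]
    conv_lhs => rw [← e.sum_repr v]
    rw [hgsum Finset.univ (fun i => e.repr v i) (e k),
      Finset.sum_eq_single k (fun i _ hik => by rw [horth i k hik, mul_zero])
        (fun h => absurd (Finset.mem_univ k) h)]
    rw [hdiag]
  -- orthonormal expansion
  have hexp : ∀ v : V, (∑ k : Fin n, (η k * g (e k) v) • e k) = v := by
    intro v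
    conv_rhs => rw [← e.sum_repr v]
    refine Finset.sum_congr rfl fun k _ => ?_
    rw [hcoef]
    congr 1
    rw [mul_comm (e.repr v k) (η k), ← mul_assoc, hη2, one_mul]
  -- gamma expansion
  have hγexp : ∀ v : V, (∑ k : Fin n, ((η k * g (e k) v : ℝ) : ℂ) • γ (e k)) = γ v := by
    intro v
    rw [← hγsum Finset.univ (fun k => η k * g (e k) v), hexp]
  -- Lemma C : conjugation of a single gamma
  have hC : ∀ v : V, (∑ k : Fin n, ((η k : ℝ) : ℂ) • (γ (e k) * γ v * γ (e k)))
      = ((ε * (2 - (n : ℝ)) : ℝ) : ℂ) • γ v := by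
    intro v
    have hterm : ∀ k : Fin n, ((η k : ℝ) : ℂ) • (γ (e k) * γ v * γ (e k))
        = ((2 * ε : ℝ) : ℂ) • (((η k * g (e k) v : ℝ) : ℂ) • γ (e k))
          - ((ε : ℝ) : ℂ) • γ v := by
      intro k
      rw [hac (e k) v, sub_mul, smul_mul_assoc, one_mul,
        mul_assoc (γ v) (γ (e k)) (γ (e k)), hsq k,
        mul_smul_comm, mul_one, smul_sub, smul_smul, smul_smul, smul_smul]
      congr 2
      · push_cast; ring
      · push_cast
        have h1 : (η k : ℂ) * (η k : ℂ) = 1 := by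
          rw [← Complex.ofReal_mul, hη2]; norm_num
        calc (η k : ℂ) * ((ε : ℂ) * (η k : ℂ)) = (ε : ℂ) * ((η k : ℂ) * (η k : ℂ)) := by ring
          _ = (ε : ℂ) := by rw [h1, mul_one]
    rw [Finset.sum_congr rfl fun k _ => hterm k, Finset.sum_sub_distrib,
      ← Finset.smul_sum, hγexp, Finset.sum_const, Finset.card_univ, Fintype.card_fin,
      ← Nat.cast_smul_eq_nsmul ℂ, smul_smul, ← sub_smul]
    congr 1
    push_cast
    ring
  -- Lemma D : conjugation of 𝔽
  have hD : (∑ k : Fin n, ((η k : ℝ) : ℂ) • (γ (e k) * 𝔽 * γ (e k)))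
      = ((ε * ((n : ℝ) - 4) : ℝ) : ℂ) • 𝔽 := by
    have hD0 : ∀ i : Fin m,
        (∑ k : Fin n, ((η k : ℝ) : ℂ) • (γ (e k) * γ (a i) * γ (b i) * γ (e k)))
        = ((ε * ((n : ℝ) - 4) : ℝ) : ℂ) • (γ (a i) * γ (b i)) := by
      intro i
      have hba : γ (b i) * γ (a i) = -(γ (a i) * γ (b i)) := by
        have h := hcl (a i) (b i)
        rw [hab i] at h
        norm_num at h
        exact eq_neg_of_add_eq_zero_right h
      have hterm : ∀ k : Fin n, ((η k : ℝ) : ℂ) • (γ (e k) * γ (a i) * γ (b i) * γ (e k))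
          = ((2 * ε : ℝ) : ℂ) • (γ (b i) * (((η k * g (e k) (a i) : ℝ) : ℂ) • γ (e k)))
            - ((η k : ℝ) : ℂ) • (γ (a i) * (γ (e k) * γ (b i) * γ (e k))) := by
        intro k
        rw [hac (e k) (a i), sub_mul, sub_mul, smul_mul_assoc, one_mul, smul_mul_assoc,
          mul_assoc (γ (a i)) (γ (e k)) (γ (b i)),
          mul_assoc (γ (a i)) (γ (e k) * γ (b i)) (γ (e k)),
          smul_sub, smul_smul, mul_smul_comm, smul_smul]
        congr 2
        push_cast
        ring
      rw [Finset.sum_congr rfl fun k _ => hterm k, Finset.sum_sub_distrib,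
        ← Finset.smul_sum, ← Finset.mul_sum, hγexp (a i)]
      have hsecond : (∑ k : Fin n, ((η k : ℝ) : ℂ) • (γ (a i) * (γ (e k) * γ (b i) * γ (e k))))
          = ((ε * (2 - (n : ℝ)) : ℝ) : ℂ) • (γ (a i) * γ (b i)) := by
        calc (∑ k : Fin n, ((η k : ℝ) : ℂ) • (γ (a i) * (γ (e k) * γ (b i) * γ (e k))))
            = γ (a i) * (∑ k : Fin n, ((η k : ℝ) : ℂ) • (γ (e k) * γ (b i) * γ (e k))) := by
              rw [Finset.mul_sum]
              exact Finset.sum_congr rfl fun k _ => (mul_smul_comm _ _ _).symm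
          _ = γ (a i) * (((ε * (2 - (n : ℝ)) : ℝ) : ℂ) • γ (b i)) := by rw [hC (b i)]
          _ = ((ε * (2 - (n : ℝ)) : ℝ) : ℂ) • (γ (a i) * γ (b i)) := mul_smul_comm _ _ _
      rw [hsecond, hba, smul_neg, ← neg_smul, ← sub_smul]
      congr 1
      push_cast
      ring
    rw [h𝔽]
    calc (∑ k : Fin n, ((η k : ℝ) : ℂ) •
            (γ (e k) * (∑ i : Fin m, γ (a i) * γ (b i) * K i) * γ (e k)))
        = ∑ k : Fin n, ∑ i : Fin m, ((η k : ℝ) : ℂ) •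
            ((γ (e k) * γ (a i) * γ (b i) * γ (e k)) * K i) := by
          refine Finset.sum_congr rfl fun k _ => ?_
          rw [Finset.mul_sum, Finset.sum_mul, Finset.smul_sum]
          refine Finset.sum_congr rfl fun i _ => ?_
          congr 1
          calc γ (e k) * (γ (a i) * γ (b i) * K i) * γ (e k)
              = γ (e k) * γ (a i) * γ (b i) * (K i * γ (e k)) := by
                simp only [mul_assoc]
            _ = γ (e k) * γ (a i) * γ (b i) * (γ (e k) * K i) := by rw [hK i (e k)]
            _ = (γ (e k) * γ (a i) * γ (b i) * γ (e k)) * K i := by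
                simp only [mul_assoc]
      _ = ∑ i : Fin m, (∑ k : Fin n, ((η k : ℝ) : ℂ) •
            (γ (e k) * γ (a i) * γ (b i) * γ (e k))) * K i := by
          rw [Finset.sum_comm]
          refine Finset.sum_congr rfl fun i _ => ?_
          rw [Finset.sum_mul]
          exact Finset.sum_congr rfl fun k _ => (smul_mul_assoc _ _ _).symm
      _ = ∑ i : Fin m, ((ε * ((n : ℝ) - 4) : ℝ) : ℂ) • (γ (a i) * γ (b i) * K i) := by
          refine Finset.sum_congr rfl fun i _ => ?_
          rw [hD0 i, smul_mul_assoc]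
      _ = ((ε * ((n : ℝ) - 4) : ℝ) : ℂ) • ∑ i : Fin m, γ (a i) * γ (b i) * K i := by
          rw [Finset.smul_sum]
  -- trace of each anticommutator square
  have hTsq : ∀ k : Fin n,
      LinearMap.trace ℂ E ((γ (e k) * 𝔽 + 𝔽 * γ (e k)) * (γ (e k) * 𝔽 + 𝔽 * γ (e k)))
      = 2 * LinearMap.trace ℂ E ((γ (e k) * 𝔽 * γ (e k)) * 𝔽)
        + ((2 * ε * η k : ℝ) : ℂ) * LinearMap.trace ℂ E (𝔽 * 𝔽) := by
    intro k
    have expand : (γ (e k) * 𝔽 + 𝔽 * γ (e k)) * (γ (e k) * 𝔽 + 𝔽 * γ (e k))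
        = (γ (e k) * 𝔽 * γ (e k)) * 𝔽 + (γ (e k) * 𝔽) * (𝔽 * γ (e k))
          + ((𝔽 * γ (e k)) * (γ (e k) * 𝔽) + 𝔽 * (γ (e k) * 𝔽 * γ (e k))) := by
      simp only [add_mul, mul_add, mul_assoc]
      abel
    have hmid : (𝔽 * γ (e k)) * (γ (e k) * 𝔽) = ((ε * η k : ℝ) : ℂ) • (𝔽 * 𝔽) := by
      calc (𝔽 * γ (e k)) * (γ (e k) * 𝔽) = 𝔽 * ((γ (e k) * γ (e k)) * 𝔽) := by
            simp only [mul_assoc]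
        _ = 𝔽 * ((((ε * η k : ℝ) : ℂ) • 1) * 𝔽) := by rw [hsq k]
        _ = ((ε * η k : ℝ) : ℂ) • (𝔽 * 𝔽) := by
            rw [smul_mul_assoc, one_mul, mul_smul_comm]
    rw [expand, map_add, map_add, map_add]
    rw [LinearMap.trace_mul_comm ℂ (γ (e k) * 𝔽) (𝔽 * γ (e k)), hmid,
      LinearMap.trace_mul_comm ℂ 𝔽 (γ (e k) * 𝔽 * γ (e k)), map_smul, smul_eq_mul]
    push_cast
    ring
  -- assemble
  have hsum : (∑ k : Fin n, ((η k : ℝ) : ℂ) *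
      LinearMap.trace ℂ E ((γ (e k) * 𝔽 * γ (e k)) * 𝔽))
      = ((ε * ((n : ℝ) - 4) : ℝ) : ℂ) * LinearMap.trace ℂ E (𝔽 * 𝔽) := by
    calc (∑ k : Fin n, ((η k : ℝ) : ℂ) *
          LinearMap.trace ℂ E ((γ (e k) * 𝔽 * γ (e k)) * 𝔽))
        = LinearMap.trace ℂ E (∑ k : Fin n,
            (((η k : ℝ) : ℂ) • (γ (e k) * 𝔽 * γ (e k))) * 𝔽) := by
          rw [map_sum]
          refine Finset.sum_congr rfl fun k _ => ?_
          rw [smul_mul_assoc, map_smul, smul_eq_mul]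
      _ = LinearMap.trace ℂ E ((∑ k : Fin n,
            ((η k : ℝ) : ℂ) • (γ (e k) * 𝔽 * γ (e k))) * 𝔽) := by
          rw [Finset.sum_mul]
      _ = ((ε * ((n : ℝ) - 4) : ℝ) : ℂ) * LinearMap.trace ℂ E (𝔽 * 𝔽) := by
          rw [hD, smul_mul_assoc, map_smul, smul_eq_mul]
  have hε2' : (ε : ℂ) * (ε : ℂ) = 1 := by
    rw [← Complex.ofReal_mul, hε2]; norm_num
  calc ((ε : ℂ) / 4) * ∑ k : Fin n, ((η k : ℝ) : ℂ) *
        LinearMap.trace ℂ E ((γ (e k) * 𝔽 + 𝔽 * γ (e k)) * (γ (e k) * 𝔽 + 𝔽 * γ (e k)))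
      = ((ε : ℂ) / 4) * ∑ k : Fin n,
          (2 * (((η k : ℝ) : ℂ) * LinearMap.trace ℂ E ((γ (e k) * 𝔽 * γ (e k)) * 𝔽))
            + (2 * (ε : ℂ)) * LinearMap.trace ℂ E (𝔽 * 𝔽)) := by
        congr 1
        refine Finset.sum_congr rfl fun k _ => ?_
        rw [hTsq k]
        have h1 : (η k : ℂ) * (η k : ℂ) = 1 := by
          rw [← Complex.ofReal_mul, hη2]; norm_num
        push_cast
        linear_combination 2 * (ε : ℂ) * LinearMap.trace ℂ E (𝔽 * 𝔽) * h1
    _ = ((ε : ℂ) / 4) * (2 * (∑ k : Fin n, ((η k : ℝ) : ℂ) *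
          LinearMap.trace ℂ E ((γ (e k) * 𝔽 * γ (e k)) * 𝔽))
          + (n : ℂ) * ((2 * (ε : ℂ)) * LinearMap.trace ℂ E (𝔽 * 𝔽))) := by
        rw [Finset.sum_add_distrib, ← Finset.mul_sum, Finset.sum_const, Finset.card_univ,
          Fintype.card_fin, nsmul_eq_mul]
    _ = ((n : ℂ) - 2) * LinearMap.trace ℂ E (𝔽 * 𝔽) := by
        rw [hsum]
        push_cast
        linear_combination (((n : ℂ) - 2) * LinearMap.trace ℂ E (𝔽 * 𝔽)) * hε2'
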